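/- Proposition 1 (identification of DATT(g,t), never-treated comparison, degenerate covariates): Suppose the parallel-gaps assumption based on the never-treated group holds: E[Y_t(∞) − Y_{g−1}(∞) | G=g, S_s] − E[Y_t(∞) − Y_{g−1}(∞) | G=g, S_{s'}] = E[Y_t(∞) − Y_{g−1}(∞) | G=∞, S_s] − E[Y_t(∞) − Y_{g−1}(∞) | G=∞, S_{s'}]. Then DATT(g,t) = (E[Y_t − Y_{g−1} | G=g, S_s] − E[Y_t − Y_{g−1} | G=g, S_{s'}]) − (E[Y_t − Y_{g−1} | G=∞, S_s] − E[Y_t − Y_{g−1} | G=∞, S_{s'}]), where Y_τ denotes the observed outcome at period τ. -/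

import Mathlib

open MeasureTheory ProbabilityTheory
open scoped Classical

lemma my_integral_cond_congrOn {Ω : Type*} [MeasurableSpace Ω] (μ : Measure Ω)
    (A : Set Ω) {f h : Ω → ℝ}
    (hf : AEStronglyMeasurable f μ) (hh : AEStronglyMeasurable h μ)
    (heq : Set.EqOn f h A) :
    ∫ ω, f ω ∂(μ[|A]) = ∫ ω, h ω ∂(μ[|A]) := by
  have hle : μ.restrict A ≤ μ := Measure.restrict_le_self
  set f' := hf.mk f with hf'
  set h' := hh.mk h with hh'
  have hfe : f =ᵐ[μ.restrict A] f' := hf.ae_eq_mk.filter_mono (ae_mono hle)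
  have hhe : h =ᵐ[μ.restrict A] h' := hh.ae_eq_mk.filter_mono (ae_mono hle)
  have hts : MeasurableSet {x | f' x = h' x} :=
    hf.stronglyMeasurable_mk.measurableSet_eq_fun hh.stronglyMeasurable_mk
  have hnull : μ.restrict A {x | f' x = h' x}ᶜ = 0 := by
    rw [Measure.restrict_apply hts.compl]
    have hsub : {x | f' x = h' x}ᶜ ∩ A ⊆ {x | f x = f' x}ᶜ ∪ {x | h x = h' x}ᶜ := by
      intro x hx
      by_contra hcon
      simp only [Set.mem_union, Set.mem_compl_iff, Set.mem_setOf_eq, not_or, not_not] at hcon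
      have : f' x = h' x := by rw [← hcon.1, ← hcon.2]; exact heq hx.2
      exact hx.1 this
    have h1 : μ {x | f x = f' x}ᶜ = 0 := by
      exact ae_iff.1 hf.ae_eq_mk
    have h2 : μ {x | h x = h' x}ᶜ = 0 := by
      exact ae_iff.1 hh.ae_eq_mk
    exact le_antisymm (le_trans (measure_mono hsub)
      (le_trans (measure_union_le _ _) (by rw [h1, h2]; simp))) (zero_le)
  have hfh' : f' =ᵐ[μ.restrict A] h' := by
    rw [Filter.EventuallyEq, ae_iff]
    simpa [Set.compl_setOf] using hnull
  have key : ∫ ω, f ω ∂(μ.restrict A) = ∫ ω, h ω ∂(μ.restrict A) :=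
    integral_congr_ae (hfe.trans (hfh'.trans hhe.symm))
  simp only [ProbabilityTheory.cond, integral_smul_measure, key]

lemma my_integrable_cond {Ω : Type*} [MeasurableSpace Ω] {μ : Measure Ω}
    {f : Ω → ℝ} (hf : Integrable f μ) (A : Set Ω) (hA : μ A ≠ 0) :
    Integrable f (μ[|A]) := by
  rw [ProbabilityTheory.cond]
  exact ((hf.mono_measure Measure.restrict_le_self).smul_measure
    (by simpa using (ENNReal.inv_ne_top.2 hA)))

/-- Proposition 1 (identification of `DATT(g,t)`, never-treated comparison,
degenerate covariates). `G` is the cohort variable (`⊤` = never treated),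
`Ss` is subgroup `s`, `Ssᶜ` is subgroup `s'`. `Y τ γ` is the potential outcome
`Y_τ(γ)` and `Yobs τ` is the observed outcome at period `τ`. -/
theorem datt_identification_never_treated
    {Ω : Type*} [MeasurableSpace Ω] (μ : Measure Ω) [IsProbabilityMeasure μ]
    (T : ℕ) (hT : 1 ≤ T)
    (G : Ω → ℕ∞) (hGrange : ∀ ω, G ω = ⊤ ∨ (1 ≤ G ω ∧ G ω ≤ (T : ℕ∞)))
    (Ss : Set Ω)
    (Y : ℕ → ℕ∞ → Ω → ℝ)
    (hIntY : ∀ τ γ, Integrable (Y τ γ) μ)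
    (Yobs : ℕ → Ω → ℝ)
    (hYobs : ∀ τ ω, Yobs τ ω = if G ω ≤ (τ : ℕ∞) then Y τ (G ω) ω else Y τ ⊤ ω)
    (hIntYobs : ∀ τ, Integrable (Yobs τ) μ)
    (g t : ℕ) (hg1 : 1 ≤ g) (hgt : g ≤ t) (htT : t ≤ T)
    (hpos1 : 0 < μ ({ω | G ω = (g : ℕ∞)} ∩ Ss))
    (hpos2 : 0 < μ ({ω | G ω = (g : ℕ∞)} ∩ Ssᶜ))
    (hpos3 : 0 < μ ({ω | G ω = ⊤} ∩ Ss))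
    (hpos4 : 0 < μ ({ω | G ω = ⊤} ∩ Ssᶜ))
    -- Parallel gaps based on the not-yet-treated group
    (hPG : (∫ ω, (Y t ⊤ ω - Y (g-1) ⊤ ω) ∂(μ[|{ω | G ω = (g : ℕ∞)} ∩ Ss]))
          - (∫ ω, (Y t ⊤ ω - Y (g-1) ⊤ ω) ∂(μ[|{ω | G ω = (g : ℕ∞)} ∩ Ssᶜ]))
        = (∫ ω, (Y t ⊤ ω - Y (g-1) ⊤ ω) ∂(μ[|{ω | G ω = ⊤} ∩ Ss]))
          - (∫ ω, (Y t ⊤ ω - Y (g-1) ⊤ ω) ∂(μ[|{ω | G ω = ⊤} ∩ Ssᶜ]))) :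
    -- DATT(g,t) equals the triple-difference of observed outcomes
    (∫ ω, (Y t (g : ℕ∞) ω - Y t ⊤ ω) ∂(μ[|{ω | G ω = (g : ℕ∞)} ∩ Ss]))
      - (∫ ω, (Y t (g : ℕ∞) ω - Y t ⊤ ω) ∂(μ[|{ω | G ω = (g : ℕ∞)} ∩ Ssᶜ]))
    = ((∫ ω, (Yobs t ω - Yobs (g-1) ω) ∂(μ[|{ω | G ω = (g : ℕ∞)} ∩ Ss]))
        - (∫ ω, (Yobs t ω - Yobs (g-1) ω) ∂(μ[|{ω | G ω = (g : ℕ∞)} ∩ Ssᶜ])))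
      - ((∫ ω, (Yobs t ω - Yobs (g-1) ω) ∂(μ[|{ω | G ω = ⊤} ∩ Ss]))
        - (∫ ω, (Yobs t ω - Yobs (g-1) ω) ∂(μ[|{ω | G ω = ⊤} ∩ Ssᶜ]))) := by
  have hmObs : AEStronglyMeasurable (fun ω => Yobs t ω - Yobs (g-1) ω) μ :=
    ((hIntYobs t).sub (hIntYobs (g-1))).aestronglyMeasurable
  -- pointwise identifications on the four conditioning events
  have hEqg : ∀ ω, G ω = (g : ℕ∞) → Yobs t ω - Yobs (g-1) ω = Y t g ω - Y (g-1) ⊤ ω := by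
    intro ω hω
    have h1 : Yobs t ω = Y t g ω := by
      rw [hYobs t ω, hω, if_pos (by exact_mod_cast hgt)]
    have h2 : Yobs (g-1) ω = Y (g-1) ⊤ ω := by
      rw [hYobs (g-1) ω, hω, if_neg]
      intro hle
      have : g ≤ g - 1 := by exact_mod_cast hle
      omega
    rw [h1, h2]
  have hEqinf : ∀ ω, G ω = ⊤ → Yobs t ω - Yobs (g-1) ω = Y t ⊤ ω - Y (g-1) ⊤ ω := by
    intro ω hω
    have h1 : Yobs t ω = Y t ⊤ ω := by
      rw [hYobs t ω, hω]; split <;> rfl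
    have h2 : Yobs (g-1) ω = Y (g-1) ⊤ ω := by
      rw [hYobs (g-1) ω, hω]; split <;> rfl
    rw [h1, h2]
  -- rewrite the observed integrals on the treated-cohort events
  have hOg : ∀ B : Set Ω,
      ∫ ω, (Yobs t ω - Yobs (g-1) ω) ∂(μ[|{ω | G ω = (g : ℕ∞)} ∩ B])
        = ∫ ω, (Y t g ω - Y (g-1) ⊤ ω) ∂(μ[|{ω | G ω = (g : ℕ∞)} ∩ B]) := by
    intro B
    exact my_integral_cond_congrOn μ _ hmObs
      (((hIntY t g).sub (hIntY (g-1) ⊤)).aestronglyMeasurable)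
      (fun ω hω => hEqg ω hω.1)
  have hOinf : ∀ B : Set Ω,
      ∫ ω, (Yobs t ω - Yobs (g-1) ω) ∂(μ[|{ω | G ω = ⊤} ∩ B])
        = ∫ ω, (Y t ⊤ ω - Y (g-1) ⊤ ω) ∂(μ[|{ω | G ω = ⊤} ∩ B]) := by
    intro B
    exact my_integral_cond_congrOn μ _ hmObs
      (((hIntY t ⊤).sub (hIntY (g-1) ⊤)).aestronglyMeasurable)
      (fun ω hω => hEqinf ω hω.1)
  -- split the treated-cohort integrand
  have hsplit : ∀ (A : Set Ω), μ A ≠ 0 →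
      ∫ ω, (Y t g ω - Y (g-1) ⊤ ω) ∂(μ[|A])
        = (∫ ω, (Y t g ω - Y t ⊤ ω) ∂(μ[|A]))
          + ∫ ω, (Y t ⊤ ω - Y (g-1) ⊤ ω) ∂(μ[|A]) := by
    intro A hA
    have h1 : Integrable (fun ω => Y t g ω - Y t ⊤ ω) (μ[|A]) :=
      my_integrable_cond ((hIntY t g).sub (hIntY t ⊤)) A hA
    have h2 : Integrable (fun ω => Y t ⊤ ω - Y (g-1) ⊤ ω) (μ[|A]) :=
      my_integrable_cond ((hIntY t ⊤).sub (hIntY (g-1) ⊤)) A hA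
    rw [← integral_add h1 h2]
    congr 1
    funext ω
    ring
  rw [hOg Ss, hOg Ssᶜ, hOinf Ss, hOinf Ssᶜ, hsplit _ hpos1.ne', hsplit _ hpos2.ne']
  linarith [hPG]
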